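/- Let A ∈ ℝ^{m×n}, let Θ ∈ ℝ^{n×n} be diagonal with strictly positive diagonal entries, let N ⊆ {1,…,n} with complement B, let A_N be the submatrix of columns of A in N and Θ_N the corresponding principal submatrix of Θ. Let S = A_N Θ_N A_Nᵀ, R = off(S), and let δ_d > 0 satisfy δ_d > Σ_{j≠i} |S_{ij}| for every i ∈ {1,…,m} (so that δ_d I_m + R is positive definite). With K = AΘAᵀ + δ_d I_m, every eigenvalue of the symmetric matrix K^{-1/2} R K^{-1/2} is strictly greater than −1. -/

import Mathlib

open Matrix

/-- off(B): same off-diagonal entries as B, zero diagonal. -/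
def offDiag {ι : Type*} [DecidableEq ι] (B : Matrix ι ι ℝ) : Matrix ι ι ℝ :=
  B - Matrix.diagonal (fun i => B i i)

open scoped ComplexOrder in
/-- The old Mathlib `Matrix.PosSemidef.sqrt` (removed since), with its original definition. -/
noncomputable def posSemidefSqrt {n 𝕜 : Type*} [Fintype n] [DecidableEq n] [RCLike 𝕜]
    {A : Matrix n n 𝕜} (hA : A.PosSemidef) : Matrix n n 𝕜 :=
  hA.1.eigenvectorUnitary.1 * diagonal ((↑) ∘ Real.sqrt ∘ hA.1.eigenvalues) *
    (star hA.1.eigenvectorUnitary : Matrix n n 𝕜)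

lemma quad_form_eq {m : ℕ} (M : Matrix (Fin m) (Fin m) ℝ) (x : Fin m → ℝ) :
    x ⬝ᵥ M.mulVec x = ∑ i, ∑ j, x i * (M i j * x j) := by
  simp [dotProduct, Matrix.mulVec, Finset.mul_sum]

lemma swap_sum {m : ℕ} (f : Fin m → Fin m → ℝ) :
    ∑ i, ∑ j ∈ Finset.univ.erase i, f i j
      = ∑ j, ∑ i ∈ Finset.univ.erase j, f i j := by
  refine Finset.sum_comm' ?_
  intro i j
  simp [Finset.mem_erase, eq_comm, and_comm]


lemma posdef_offdiag_add {m : ℕ} (S : Matrix (Fin m) (Fin m) ℝ)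
    (hsymm : ∀ i j, S i j = S j i) (δ : ℝ)
    (hdom : ∀ i, ∑ j ∈ Finset.univ.erase i, |S i j| < δ) :
    (offDiag S + δ • (1 : Matrix (Fin m) (Fin m) ℝ)).PosDef := by
  refine Matrix.posDef_iff_dotProduct_mulVec.mpr ⟨?_, ?_⟩
  · show _ᴴ = _
    ext i j
    simp only [Matrix.conjTranspose_apply, Matrix.add_apply, Matrix.smul_apply,
      Matrix.one_apply, offDiag, Matrix.sub_apply, Matrix.diagonal_apply, star_trivial]
    by_cases h : i = j <;> simp [h, hsymm i j, eq_comm]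
  · intro x hx
    have hx' : ∃ i, x i ≠ 0 := by
      by_contra h
      push_neg at h
      exact hx (funext h)
    simp only [star_trivial]
    -- quadratic form
    have key : x ⬝ᵥ (offDiag S + δ • (1 : Matrix (Fin m) (Fin m) ℝ)).mulVec x
        = (∑ i, ∑ j ∈ Finset.univ.erase i, x i * (S i j * x j)) + δ * ∑ i, x i ^ 2 := by
      rw [quad_form_eq]
      have : ∀ i : Fin m, ∑ j, x i * ((offDiag S + δ • (1 : Matrix (Fin m) (Fin m) ℝ)) i j * x j)
          = (∑ j ∈ Finset.univ.erase i, x i * (S i j * x j)) + δ * x i ^ 2 := by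
        intro i
        rw [← Finset.sum_erase_add _ _ (Finset.mem_univ i)]
        congr 1
        · refine Finset.sum_congr rfl fun j hj => ?_
          have hji : j ≠ i := (Finset.mem_erase.1 hj).1
          simp [offDiag, Matrix.one_apply, Matrix.diagonal_apply, hji, Ne.symm hji]
        · simp [offDiag, Matrix.one_apply, sq]
          ring
      rw [Finset.sum_congr rfl fun i _ => this i, Finset.sum_add_distrib, Finset.mul_sum]
    rw [key]
    -- bound the off-diagonal part
    have hbound : ∀ i : Fin m, ∀ j : Fin m,
        -(|S i j| * x i ^ 2 / 2 + |S i j| * x j ^ 2 / 2) ≤ x i * (S i j * x j) := by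
      intro i j
      have h1 : |x i * (S i j * x j)| ≤ |S i j| * (x i ^ 2 / 2 + x j ^ 2 / 2) := by
        rw [abs_mul, abs_mul]
        calc |x i| * (|S i j| * |x j|) = |S i j| * (|x i| * |x j|) := by ring
        _ ≤ |S i j| * (x i ^ 2 / 2 + x j ^ 2 / 2) := by
            apply mul_le_mul_of_nonneg_left _ (abs_nonneg _)
            nlinarith [sq_nonneg (|x i| - |x j|), sq_abs (x i), sq_abs (x j)]
      have := neg_abs_le (x i * (S i j * x j))
      nlinarith
    have hsum1 : ∑ i, ∑ j ∈ Finset.univ.erase i, (|S i j| * x i ^ 2 / 2 + |S i j| * x j ^ 2 / 2)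
        = ∑ i, (∑ j ∈ Finset.univ.erase i, |S i j|) * x i ^ 2 := by
      rw [Finset.sum_congr rfl (fun i _ => Finset.sum_add_distrib), Finset.sum_add_distrib]
      have h2 : ∑ i, ∑ j ∈ Finset.univ.erase i, |S i j| * x j ^ 2 / 2
          = ∑ j, ∑ i ∈ Finset.univ.erase j, |S i j| * x j ^ 2 / 2 := swap_sum _
      rw [h2]
      have h3 : ∀ j : Fin m, ∑ i ∈ Finset.univ.erase j, |S i j| * x j ^ 2 / 2
          = ∑ i ∈ Finset.univ.erase j, |S j i| * x j ^ 2 / 2 := by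
        intro j
        exact Finset.sum_congr rfl fun i _ => by rw [hsymm i j]
      rw [Finset.sum_congr rfl fun j _ => h3 j]
      rw [← Finset.sum_add_distrib]
      refine Finset.sum_congr rfl fun i _ => ?_
      rw [← Finset.sum_add_distrib, Finset.sum_mul]
      exact Finset.sum_congr rfl fun j _ => by ring
    have hlow : -(∑ i, (∑ j ∈ Finset.univ.erase i, |S i j|) * x i ^ 2)
        ≤ ∑ i, ∑ j ∈ Finset.univ.erase i, x i * (S i j * x j) := by
      rw [← hsum1, ← Finset.sum_neg_distrib]
      refine Finset.sum_le_sum fun i _ => ?_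
      rw [← Finset.sum_neg_distrib]
      exact Finset.sum_le_sum fun j _ => hbound i j
    have hstrict : ∑ i, (∑ j ∈ Finset.univ.erase i, |S i j|) * x i ^ 2 < δ * ∑ i, x i ^ 2 := by
      rw [Finset.mul_sum]
      obtain ⟨i₀, hi₀⟩ := hx'
      refine Finset.sum_lt_sum (fun i _ => ?_) ⟨i₀, Finset.mem_univ i₀, ?_⟩
      · exact mul_le_mul_of_nonneg_right (hdom i).le (sq_nonneg _)
      · exact mul_lt_mul_of_pos_right (hdom i₀) (by positivity)
    linarith

/-- With `Θ` diagonal positive, `N` a set of column indices, `S = A_N Θ_N A_Nᵀ`,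
`R = off(S)`, and `δ_d > 0` strictly dominating the off-diagonal row sums of `S`
(so `δ_d I + R` is positive definite), with `K = AΘAᵀ + δ_d I`, every eigenvalue of
`K^{-1/2} R K^{-1/2}` is strictly greater than −1. -/
theorem stmt_4 {m n : ℕ} (A : Matrix (Fin m) (Fin n) ℝ)
    (d : Fin n → ℝ) (hd : ∀ j, 0 < d j)
    (N : Finset (Fin n))
    (AN : Matrix (Fin m) {j // j ∈ N} ℝ)
    (hAN : AN = A.submatrix id (fun j : {j // j ∈ N} => (j : Fin n)))
    (ThetaN : Matrix {j // j ∈ N} {j // j ∈ N} ℝ)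
    (hThetaN : ThetaN = Matrix.diagonal (fun j : {j // j ∈ N} => d j))
    (δd : ℝ) (hδd : 0 < δd)
    (S R K : Matrix (Fin m) (Fin m) ℝ)
    (hS : S = AN * ThetaN * ANᵀ)
    (hR : R = offDiag S)
    (hdom : ∀ i : Fin m, ∑ j ∈ Finset.univ.erase i, |S i j| < δd)
    (hK : K = A * Matrix.diagonal d * Aᵀ + δd • (1 : Matrix (Fin m) (Fin m) ℝ))
    (hKpd : K.PosDef) :
    ∀ μ : ℝ, ∀ x : Fin m → ℝ, x ≠ 0 →
      ((posSemidefSqrt hKpd.posSemidef)⁻¹ * R * (posSemidefSqrt hKpd.posSemidef)⁻¹).mulVec x = μ • x →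
      -1 < μ := by
  intro μ x hx hMx
  set Q := posSemidefSqrt hKpd.posSemidef with hQdef
  set W := Q⁻¹ with hWdef
  have hQ2 : Q * Q = K := by
    have hU : (star hKpd.posSemidef.1.eigenvectorUnitary : Matrix (Fin m) (Fin m) ℝ) * (hKpd.posSemidef.1.eigenvectorUnitary : Matrix (Fin m) (Fin m) ℝ) = 1 :=
      Matrix.mem_unitaryGroup_iff'.mp (SetLike.coe_mem _)
    have hev := hKpd.posSemidef.eigenvalues_nonneg
    conv_rhs => rw [hKpd.posSemidef.1.spectral_theorem]
    rw [hQdef, posSemidefSqrt, Unitary.conjStarAlgAut_apply]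
    simp only [Matrix.mul_assoc]
    rw [← Matrix.mul_assoc (star _ : Matrix _ _ ℝ), hU, Matrix.one_mul, ← Matrix.mul_assoc (diagonal _),
      diagonal_mul_diagonal]
    congr 3
    funext i
    simp [Real.mul_self_sqrt (hev i)]
  have hQt : Qᵀ = Q := by
    rw [hQdef, posSemidefSqrt, Matrix.transpose_mul, Matrix.transpose_mul, diagonal_transpose, Matrix.mul_assoc]
    rfl
  have hdet : IsUnit Q.det := by
    have h1 : Q.det * Q.det = K.det := by rw [← Matrix.det_mul, hQ2]
    have h2 : 0 < K.det := hKpd.det_pos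
    have : Q.det ≠ 0 := by intro h; rw [h] at h1; simp at h1; linarith
    exact this.isUnit
  have hQW : Q * W = 1 := Matrix.mul_nonsing_inv Q hdet
  have hWt : Wᵀ = W := by rw [hWdef, Matrix.transpose_nonsing_inv, hQt]
  -- symmetry of S
  have hSsymT : Sᵀ = S := by
    rw [hS, hThetaN]
    rw [Matrix.transpose_mul, Matrix.transpose_mul, Matrix.transpose_transpose,
      Matrix.diagonal_transpose, Matrix.mul_assoc]
  have hsym : ∀ i j, S i j = S j i := fun i j => congrFun (congrFun hSsymT j) i
  -- R + K is positive definite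
  have hPSD : (A * Matrix.diagonal d * Aᵀ).PosSemidef := by
    have hdiag : (Matrix.diagonal d).PosSemidef :=
      Matrix.posSemidef_diagonal_iff.2 fun j => (hd j).le
    have := hdiag.mul_mul_conjTranspose_same A
    rwa [Matrix.conjTranspose_eq_transpose_of_trivial] at this
  have hRK : (R + K).PosDef := by
    rw [hR, hK]
    have heq : offDiag S + (A * Matrix.diagonal d * Aᵀ + δd • (1 : Matrix (Fin m) (Fin m) ℝ))
        = (offDiag S + δd • (1 : Matrix (Fin m) (Fin m) ℝ)) + A * Matrix.diagonal d * Aᵀ := by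
      abel
    rw [heq]
    exact (posdef_offdiag_add S hsym δd hdom).add_posSemidef hPSD
  -- change of variables
  set y := W.mulVec x with hydef
  have hxy : Q.mulVec y = x := by
    rw [hydef, Matrix.mulVec_mulVec, hQW, Matrix.one_mulVec]
  have hy0 : y ≠ 0 := by
    intro h
    apply hx
    rw [← hxy, h, Matrix.mulVec_zero]
  have hvm : x ᵥ* W = y := by rw [← hWt, Matrix.vecMul_transpose, hydef]
  have h1 : x ⬝ᵥ ((W * R * W).mulVec x) = y ⬝ᵥ R.mulVec y := by
    rw [← Matrix.mulVec_mulVec, ← Matrix.mulVec_mulVec, Matrix.dotProduct_mulVec, hvm]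
  have hvmQ : y ᵥ* Q = x := by rw [← hQt, Matrix.vecMul_transpose, hxy]
  have h2 : y ⬝ᵥ K.mulVec y = x ⬝ᵥ x := by
    rw [← hQ2, ← Matrix.mulVec_mulVec, Matrix.dotProduct_mulVec, hvmQ, hxy]
  have hpos : 0 < y ⬝ᵥ (R + K).mulVec y := by
    have := hRK.dotProduct_mulVec_pos hy0
    simpa using this
  have hxx : 0 < x ⬝ᵥ x := by
    obtain ⟨i, hi⟩ : ∃ i, x i ≠ 0 := by
      by_contra h; push_neg at h; exact hx (funext h)
    rw [dotProduct]
    exact Finset.sum_pos' (fun j _ => mul_self_nonneg _)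
      ⟨i, Finset.mem_univ i, mul_self_pos.2 hi⟩
  have hsplit : y ⬝ᵥ (R + K).mulVec y = μ * (x ⬝ᵥ x) + x ⬝ᵥ x := by
    rw [Matrix.add_mulVec, dotProduct_add, h2, ← h1, hMx, dotProduct_smul]
    simp [smul_eq_mul]
  rw [hsplit] at hpos
  nlinarith
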